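/- Let q be an odd prime power (or any prime power), r, d positive integers with d | q-1, and a ∈ F_q^×. Suppose that η + a/η ∈ μ_{(q-1)/d} for all η ∈ μ_{2d}. Then x^r (x^((q-1)/d) + a) is a permutation polynomial of F_q if and only if −a ∉ μ_d, gcd(r, (q-1)/d) = 1, and gcd(2d, 2r + (q-1)/d) ≤ 2. -/

import Mathlib

private lemma myExistsOrder {F : Type*} [Field F] [Fintype F] (m : ℕ) (hm : m ∣ Fintype.card F - 1)
    (hm0 : 0 < m) : ∃ z : Fˣ, orderOf z = m := by
  classical
  obtain ⟨g, hg⟩ := IsCyclic.exists_ofOrder_eq_natCard (α := Fˣ)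
  have hcard : Nat.card Fˣ = Fintype.card F - 1 := by
    rw [Nat.card_eq_fintype_card, Fintype.card_units]
  rw [hcard] at hg
  obtain ⟨c, hc⟩ := hm
  have hc0 : 0 < c := by
    rcases Nat.eq_zero_or_pos c with h | h
    · exfalso
      subst h
      have h2 : 1 < Fintype.card F := Fintype.one_lt_card
      simp at hc
      omega
    · exact h
  refine ⟨g ^ c, ?_⟩
  rw [orderOf_pow, hg, hc]
  rw [Nat.gcd_eq_right ⟨m, by ring⟩, Nat.mul_div_cancel _ hc0]

private lemma myPowSurj {F : Type*} [Field F] [Fintype F] {s d : ℕ} (hd : 0 < d) (hs : 0 < s)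
    (hn : s * d = Fintype.card F - 1) (x : F) (hx : x ^ d = 1) : ∃ y : F, y ^ s = x := by
  classical
  have hx0 : x ≠ 0 := fun h => by simp [h, zero_pow hd.ne'] at hx
  obtain ⟨g, hg⟩ := IsCyclic.exists_generator (α := Fˣ)
  have hog : orderOf g = s * d := by
    rw [orderOf_eq_card_of_forall_mem_zpowers hg, Nat.card_eq_fintype_card, Fintype.card_units, hn]
  obtain ⟨i, hi⟩ := hg (Units.mk0 x hx0)
  simp only at hi
  have hxd : (Units.mk0 x hx0) ^ d = 1 := by
    ext; push_cast; simpa using hx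
  have h1 : g ^ (i * (d : ℤ)) = 1 := by
    rw [zpow_mul, hi]
    exact_mod_cast hxd
  have hdvd : ((s : ℤ) * d) ∣ i * d := by
    have h2 := (orderOf_dvd_iff_zpow_eq_one (x := g) (i := i * d)).mpr h1
    rw [hog] at h2; exact_mod_cast h2
  have hsi : (s : ℤ) ∣ i := by
    have hd0 : (d : ℤ) ≠ 0 := by exact_mod_cast hd.ne'
    exact (mul_dvd_mul_iff_right hd0).mp hdvd
  obtain ⟨j, hj⟩ := hsi
  refine ⟨((g ^ j : Fˣ) : F), ?_⟩
  have h3 : (g ^ j) ^ (s : ℕ) = Units.mk0 x hx0 := by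
    rw [← hi, hj, ← zpow_natCast, ← zpow_mul, mul_comm]
  calc ((g ^ j : Fˣ) : F) ^ s = (((g ^ j) ^ s : Fˣ) : F) := by push_cast; ring
    _ = x := by rw [h3]; rfl

private lemma lemZ {F : Type*} [Field F] [Fintype F] (r s d e : ℕ)
    (hr : 0 < r) (hs : 0 < s) (hd : 0 < d)
    (hn : s * d = Fintype.card F - 1) {a : F} (ha : a ≠ 0)
    (heq : ∀ ξ : F, ξ ^ d = 1 → ξ ^ r * (ξ + a) ^ s = ξ ^ e) :
    Function.Bijective (fun x : F => x ^ r * (x ^ s + a)) ↔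
      (Nat.gcd r s = 1 ∧ Nat.gcd e d = 1) := by
  classical
  set f : F → F := fun x => x ^ r * (x ^ s + a) with hf
  have hf0 : f 0 = 0 := by simp [hf, zero_pow hr.ne']
  -- basic facts
  have hmem : ∀ x : F, x ≠ 0 → (x ^ s) ^ d = 1 := by
    intro x hx
    rw [← pow_mul, hn]
    exact FiniteField.pow_card_sub_one_eq_one x hx
  have hne : ∀ ξ : F, ξ ^ d = 1 → ξ + a ≠ 0 := by
    intro ξ hξ hcon
    have hξ0 : ξ ≠ 0 := fun h => by simp [h, zero_pow hd.ne'] at hξ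
    have := heq ξ hξ
    rw [hcon, zero_pow hs.ne', mul_zero] at this
    exact pow_ne_zero e hξ0 this.symm
  have hfs : ∀ x : F, x ≠ 0 → (f x) ^ s = (x ^ s) ^ e := by
    intro x hx
    have := heq (x ^ s) (hmem x hx)
    calc (f x) ^ s = (x ^ s) ^ r * (x ^ s + a) ^ s := by
          show (x ^ r * (x ^ s + a)) ^ s = _
          rw [mul_pow, ← pow_mul, mul_comm r s, pow_mul]
      _ = (x ^ s) ^ e := this
  have hfne : ∀ x : F, x ≠ 0 → f x ≠ 0 := by
    intro x hx
    exact mul_ne_zero (pow_ne_zero r hx) (hne _ (hmem x hx))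
  constructor
  · rintro hbij
    constructor
    · -- gcd r s = 1
      by_contra hg
      obtain ⟨z, hz⟩ := myExistsOrder (Nat.gcd r s)
        (dvd_trans (Nat.gcd_dvd_right r s) ⟨d, hn.symm⟩) (Nat.gcd_pos_of_pos_left s hr)
      have hzr : (z : F) ^ r = 1 := by
        have h : z ^ r = 1 := orderOf_dvd_iff_pow_eq_one.mp (hz ▸ Nat.gcd_dvd_left r s)
        rw [← Units.val_pow_eq_pow_val, h, Units.val_one]
      have hzs : (z : F) ^ s = 1 := by
        have h : z ^ s = 1 := orderOf_dvd_iff_pow_eq_one.mp (hz ▸ Nat.gcd_dvd_right r s)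
        rw [← Units.val_pow_eq_pow_val, h, Units.val_one]
      have : f (z : F) = f 1 := by simp [hf, hzr, hzs]
      have hz1 : (z : F) = 1 := hbij.injective this
      exact hg (by rw [← hz, show z = 1 from Units.ext hz1, orderOf_one])
    · -- gcd e d = 1
      -- power map e on mu_d is surjective hence injective
      have hts : ∀ w : F, w ^ d = 1 → ∃ ξ : F, ξ ^ d = 1 ∧ ξ ^ e = w := by
        intro w hw
        obtain ⟨y, hy⟩ := myPowSurj hd hs hn w hw
        have hy0 : y ≠ 0 := by
          intro h; rw [h, zero_pow hs.ne'] at hy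
          have : w ≠ 0 := fun h0 => by simp [h0, zero_pow hd.ne'] at hw
          exact this hy.symm
        obtain ⟨x, hx⟩ := hbij.surjective y
        have hx0 : x ≠ 0 := by
          intro h0; rw [h0, hf0] at hx; exact hy0 hx.symm
        refine ⟨x ^ s, hmem x hx0, ?_⟩
        rw [← hfs x hx0, hx, hy]
      by_contra hg
      set m := Nat.gcd e d with hm
      obtain ⟨z, hz⟩ := myExistsOrder m
        (dvd_trans (Nat.gcd_dvd_right e d) ⟨s, by rw [mul_comm]; exact hn.symm⟩)
        (Nat.gcd_pos_of_pos_right e hd)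
      -- injectivity of ξ ↦ ξ^e on μ_d
      let S := {x : F // x ^ d = 1}
      have : Finite S := Subtype.finite
      let t : S → S := fun x => ⟨x.1 ^ e, by rw [← pow_mul, mul_comm, pow_mul, x.2, one_pow]⟩
      have htsurj : Function.Surjective t := by
        rintro ⟨w, hw⟩
        obtain ⟨ξ, hξ, hξe⟩ := hts w hw
        exact ⟨⟨ξ, hξ⟩, Subtype.ext hξe⟩
      have htinj : Function.Injective t := Finite.injective_iff_surjective.mpr htsurj
      have hzd : (z : F) ^ d = 1 := by
        have h : z ^ d = 1 := orderOf_dvd_iff_pow_eq_one.mp (hz ▸ Nat.gcd_dvd_right e d)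
        rw [← Units.val_pow_eq_pow_val, h, Units.val_one]
      have hze : (z : F) ^ e = 1 := by
        have h : z ^ e = 1 := orderOf_dvd_iff_pow_eq_one.mp (hz ▸ Nat.gcd_dvd_left e d)
        rw [← Units.val_pow_eq_pow_val, h, Units.val_one]
      have h1 : t ⟨(z : F), hzd⟩ = t ⟨1, one_pow d⟩ := by
        apply Subtype.ext; simp [t, hze]
      have := htinj h1
      have hz1 : (z : F) = 1 := congrArg Subtype.val this
      exact hg (by rw [← hz, show z = 1 from Units.ext hz1, orderOf_one])
  · rintro ⟨hg1, hg2⟩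
    rw [Fintype.bijective_iff_injective_and_card]
    refine ⟨?_, rfl⟩
    intro x y hxy
    simp only [hf] at hxy
    rcases eq_or_ne x 0 with hx | hx
    · rcases eq_or_ne y 0 with hy | hy
      · rw [hx, hy]
      · exfalso
        apply hfne y hy
        rw [hf]
        rw [hx] at hxy
        simp only [zero_pow hr.ne', zero_mul] at hxy
        exact hxy.symm
    · rcases eq_or_ne y 0 with hy | hy
      · exfalso
        apply hfne x hx
        rw [hf]
        rw [hy] at hxy
        simp only [zero_pow hr.ne', zero_mul] at hxy
        exact hxy
      · -- both nonzero
        set u : Fˣ := Units.mk0 x hx * (Units.mk0 y hy)⁻¹ with hu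
        have hu_val : (u : F) = x / y := by
          rw [hu]; simp [div_eq_mul_inv]
        have hxs : (x ^ s) ^ e = (y ^ s) ^ e := by
          rw [← hfs x hx, ← hfs y hy]
          simp only [hf]
          rw [hxy]
        have hus_pow : ∀ n : ℕ, x ^ n = y ^ n → u ^ n = 1 := by
          intro n h
          ext
          push_cast [hu_val]
          rw [div_pow, h, div_self (pow_ne_zero n hy)]
        -- first : u^s has order dividing e and d
        have h1 : (u ^ s) ^ e = 1 := by
          have : x ^ (s * e) = y ^ (s * e) := by
            rw [pow_mul, pow_mul, hxs]
          have := hus_pow (s * e) this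
          rwa [pow_mul] at this
        have h2 : (u ^ s) ^ d = 1 := by
          have hx1 : x ^ (s * d) = 1 := by rw [pow_mul]; exact hmem x hx
          have hy1 : y ^ (s * d) = 1 := by rw [pow_mul]; exact hmem y hy
          have := hus_pow (s * d) (hx1.trans hy1.symm)
          rwa [pow_mul] at this
        have hus : u ^ s = 1 := by
          have hdvd1 : orderOf (u ^ s) ∣ e := orderOf_dvd_iff_pow_eq_one.mpr h1
          have hdvd2 : orderOf (u ^ s) ∣ d := orderOf_dvd_iff_pow_eq_one.mpr h2
          have : orderOf (u ^ s) ∣ 1 := hg2 ▸ Nat.dvd_gcd hdvd1 hdvd2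
          rw [Nat.dvd_one] at this
          exact orderOf_eq_one_iff.mp this
        have hxys : x ^ s = y ^ s := by
          have : (u : F) ^ s = 1 := by
            rw [← Units.val_pow_eq_pow_val, hus, Units.val_one]
          rw [hu_val, div_pow] at this
          field_simp at this
          exact this
        have hur : u ^ r = 1 := by
          apply hus_pow
          have hne' : x ^ s + a ≠ 0 := hne _ (hmem x hx)
          have : x ^ r * (x ^ s + a) = y ^ r * (x ^ s + a) := by
            rw [hxy, hxys]
          exact mul_right_cancel₀ hne' this
        have hu1 : u = 1 := by
          have hdvd1 : orderOf u ∣ r := orderOf_dvd_iff_pow_eq_one.mpr hur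
          have hdvd2 : orderOf u ∣ s := orderOf_dvd_iff_pow_eq_one.mpr hus
          have : orderOf u ∣ 1 := hg1 ▸ Nat.dvd_gcd hdvd1 hdvd2
          rw [Nat.dvd_one] at this
          exact orderOf_eq_one_iff.mp this
        have : (u : F) = 1 := by rw [hu1, Units.val_one]
        rw [hu_val, div_eq_one_iff_eq hy] at this
        exact this

private lemma negA {F : Type*} [Field F] {r s d e : ℕ} (hs : 0 < s) {a : F} (ha : a ≠ 0)
    (heq : ∀ ξ : F, ξ ^ d = 1 → ξ ^ r * (ξ + a) ^ s = ξ ^ e) : ¬ (-a) ^ d = 1 := by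
  intro h
  have h2 := heq (-a) h
  rw [neg_add_cancel, zero_pow hs.ne', mul_zero] at h2
  exact (pow_ne_zero e (neg_ne_zero.mpr ha)) h2.symm

theorem stmt_1 (p k r d : ℕ) (hp : p.Prime) (hk : 0 < k) (hr : 0 < r) (hd : 0 < d)
    (F : Type*) [Field F] [Fintype F] (hF : Fintype.card F = p ^ k)
    (hdvd : d ∣ p ^ k - 1) (a : F) (ha : a ≠ 0)
    (hmu : ∀ η : AlgebraicClosure F, η ^ (2 * d) = 1 →
      (η + (algebraMap F (AlgebraicClosure F) a) / η) ^ ((p ^ k - 1) / d) = 1) :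
    Function.Bijective (fun x : F => x ^ r * (x ^ ((p ^ k - 1) / d) + a)) ↔
      (¬ (-a) ^ d = 1 ∧ Nat.gcd r ((p ^ k - 1) / d) = 1 ∧
        Nat.gcd (2 * d) (2 * r + (p ^ k - 1) / d) ≤ 2) := by
  classical
  set K := AlgebraicClosure F with hK
  set ι := algebraMap F K with hι_def
  have hι : Function.Injective ι := (algebraMap F K).injective
  set s := (p ^ k - 1) / d with hs_def
  have hq1 : 1 < p ^ k := Nat.one_lt_pow hk.ne' hp.one_lt
  have hsd : s * d = p ^ k - 1 := Nat.div_mul_cancel hdvd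
  have hs0 : 0 < s := Nat.div_pos (Nat.le_of_dvd (by omega) hdvd) hd
  have hn : s * d = Fintype.card F - 1 := by rw [hF]; exact hsd
  rcases Nat.even_or_odd s with hse | hso
  · -- Case A : s even
    obtain ⟨s', hs'⟩ := hse
    have heq : ∀ ξ : F, ξ ^ d = 1 → ξ ^ r * (ξ + a) ^ s = ξ ^ (r + s') := by
      intro ξ hξ
      have hξ0 : ξ ≠ 0 := fun h => by simp [h, zero_pow hd.ne'] at hξ
      obtain ⟨η, hη⟩ := IsAlgClosed.exists_pow_nat_eq (ι ξ) (n := 2) two_pos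
      have hη0 : η ≠ 0 := by
        intro h
        rw [h, zero_pow two_ne_zero] at hη
        exact hξ0 (hι (by rw [← hη, map_zero]))
      have hη2d : η ^ (2 * d) = 1 := by
        rw [pow_mul, hη, ← map_pow, hξ, map_one]
      have hmu' := hmu η hη2d
      apply hι
      have key : ι ξ + ι a = η * (η + ι a / η) := by
        rw [mul_add, ← hη, mul_div_assoc', mul_comm η (ι a), mul_div_assoc, div_self hη0, mul_one]; ring
      calc ι (ξ ^ r * (ξ + a) ^ s)
          = (ι ξ) ^ r * (ι ξ + ι a) ^ s := by push_cast [map_mul, map_pow, map_add]; rfl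
        _ = (η ^ 2) ^ r * (η * (η + ι a / η)) ^ s := by rw [hη, key]
        _ = η ^ (2 * r) * η ^ s * (η + ι a / η) ^ s := by rw [mul_pow, pow_mul]; ring
        _ = η ^ (2 * r + s) := by rw [hmu', mul_one, ← pow_add]
        _ = (η ^ 2) ^ (r + s') := by rw [← pow_mul]; congr 1; omega
        _ = ι (ξ ^ (r + s')) := by rw [hη, map_pow]
    have hnegA : ¬ (-a) ^ d = 1 := negA hs0 ha heq
    rw [lemZ r s d (r + s') hr hs0 hd hn ha heq]
    have hgpos : 0 < Nat.gcd d (r + s') := Nat.gcd_pos_of_pos_left _ hd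
    have harith : Nat.gcd (2 * d) (2 * r + s) ≤ 2 ↔ Nat.gcd (r + s') d = 1 := by
      have h1 : 2 * r + s = 2 * (r + s') := by omega
      rw [h1, Nat.gcd_mul_left, Nat.gcd_comm (r + s') d]
      omega
    constructor
    · rintro ⟨h1, h2⟩; exact ⟨hnegA, h1, harith.mpr h2⟩
    · rintro ⟨-, h1, h2⟩; exact ⟨h1, harith.mp h2⟩
  · rcases Nat.even_or_odd d with hde | hdo
    · -- contradiction case : s odd, d even
      exfalso
      have h1 := hmu 1 (one_pow _)
      rw [div_one] at h1
      have h2 := hmu (-1) (by rw [Even.neg_one_pow ⟨d, by ring⟩])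
      have hm1 : (-1 : K) + ι a / (-1) = -(1 + ι a) := by
        rw [div_neg, div_one]; ring
      rw [hm1, hso.neg_pow, h1] at h2
      -- h2 : -(1) = 1  in K
      have hF1 : (-1 : F) = 1 := by
        apply hι
        rw [map_neg, map_one]
        exact_mod_cast h2
      have h2d : 2 ∣ Fintype.card F - 1 := by
        rw [← hn]
        exact Dvd.dvd.mul_left hde.two_dvd s
      obtain ⟨z, hz⟩ := myExistsOrder 2 h2d two_pos
      have hz2 : (z : F) ^ 2 = 1 := by
        have h : z ^ 2 = 1 := orderOf_dvd_iff_pow_eq_one.mp (dvd_of_eq hz)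
        rw [← Units.val_pow_eq_pow_val, h, Units.val_one]
      have : ((z : F) - 1) * ((z : F) + 1) = 0 := by ring_nf; rw [← hz2]; ring
      rcases mul_eq_zero.mp this with h | h
      · have : (z : F) = 1 := by linear_combination h
        have : z = 1 := Units.ext this
        rw [this, orderOf_one] at hz; omega
      · have : (z : F) = -1 := by linear_combination h
        rw [hF1] at this
        have : z = 1 := Units.ext this
        rw [this, orderOf_one] at hz; omega
    · -- Case C : s odd, d odd
      obtain ⟨w, hw⟩ := hdo
      set c := w + 1 with hc_def
      have hc : 2 * c = d + 1 := by omega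
      set e := (2 * r + s) * c with he_def
      have heq : ∀ ξ : F, ξ ^ d = 1 → ξ ^ r * (ξ + a) ^ s = ξ ^ e := by
        intro ξ hξ
        have hξ0 : ξ ≠ 0 := fun h => by simp [h, zero_pow hd.ne'] at hξ
        set η := ξ ^ c with hη_def
        have hη0 : η ≠ 0 := pow_ne_zero c hξ0
        have hη2 : η ^ 2 = ξ := by
          rw [hη_def, ← pow_mul, mul_comm c 2, hc, pow_succ, hξ, one_mul]
        have hη2d : (ι η) ^ (2 * d) = 1 := by
          rw [← map_pow, pow_mul, hη2, hξ, map_one]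
        have hmu' := hmu (ι η) hη2d
        have hmuF : (η + a / η) ^ s = 1 := by
          apply hι
          rw [map_pow, map_add, map_div₀, map_one]
          exact hmu'
        have key : ξ + a = η * (η + a / η) := by
          field_simp
          rw [← hη2]
        calc ξ ^ r * (ξ + a) ^ s
            = (η ^ 2) ^ r * (η * (η + a / η)) ^ s := by rw [hη2, key]
          _ = η ^ (2 * r) * η ^ s * (η + a / η) ^ s := by rw [mul_pow, pow_mul]; ring
          _ = η ^ (2 * r + s) := by rw [hmuF, mul_one, ← pow_add]
          _ = ξ ^ e := by rw [hη_def, ← pow_mul, he_def, mul_comm c (2 * r + s)]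
      have hnegA : ¬ (-a) ^ d = 1 := negA hs0 ha heq
      rw [lemZ r s d e hr hs0 hd hn ha heq]
      have hto : Odd (2 * r + s) := by
        rcases hso with ⟨v, hv⟩; exact ⟨r + v, by omega⟩
      have hcd : Nat.Coprime c d := by
        have h1 : Nat.gcd c d ∣ 1 := by
          have hdd : Nat.gcd c d ∣ d := Nat.gcd_dvd_right c d
          have hcc : Nat.gcd c d ∣ 2 * c := Dvd.dvd.mul_left (Nat.gcd_dvd_left c d) 2
          rw [hc] at hcc
          have := Nat.dvd_sub hcc hdd
          simpa using this
        exact Nat.eq_one_of_dvd_one h1  -- Coprime is gcd = 1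
      have hged : Nat.gcd e d = Nat.gcd (2 * r + s) d := by
        rw [he_def, Nat.Coprime.gcd_mul_right_cancel _ hcd]
      have harith : Nat.gcd (2 * d) (2 * r + s) ≤ 2 ↔ Nat.gcd e d = 1 := by
        rw [hged]
        have h2t : Nat.Coprime 2 (2 * r + s) := Nat.coprime_two_left.mpr hto
        rw [Nat.Coprime.gcd_mul_left_cancel d h2t]
        have hodd : ¬ 2 ∣ Nat.gcd d (2 * r + s) := by
          intro h2
          have : (2 : ℕ) ∣ d := h2.trans (Nat.gcd_dvd_left d (2 * r + s))
          omega
        have hpos : 0 < Nat.gcd d (2 * r + s) := Nat.gcd_pos_of_pos_left _ hd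
        rw [Nat.gcd_comm (2 * r + s) d]
        omega
      constructor
      · rintro ⟨h1, h2⟩; exact ⟨hnegA, h1, harith.mpr h2⟩
      · rintro ⟨-, h1, h2⟩; exact ⟨h1, harith.mp h2⟩
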